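/- Let G be a finite group. The power graph P(G) is a complete graph if and only if G is cyclic of prime power order. -/
import Mathlib


/-- The power graph of a group: distinct `x, y` are adjacent iff one is a
positive power of the other. -/
def powerGraph (G : Type*) [Group G] : SimpleGraph G :=
  SimpleGraph.fromRel (fun x y => ∃ m : ℕ, 0 < m ∧ x = y ^ m)

open Subgroup Finset in
private lemma mem_zpowers_of_orderOf_dvd_aux {G : Type*} [Group G] [Fintype G] [IsCyclic G]
    {x y : G} (h : orderOf x ∣ orderOf y) : x ∈ zpowers y := by
  classical
  have hle := IsCyclic.card_pow_eq_one_le (α := G) (n := orderOf y) (orderOf_pos y)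
  set T : Finset G := Finset.univ.filter (fun b => b ^ orderOf y = 1) with hT
  have hle' : T.card ≤ orderOf y := hle
  have hsub : ((zpowers y : Set G).toFinset : Finset G) ⊆ T := by
    intro b hb
    rw [Set.mem_toFinset] at hb
    have hd : orderOf b ∣ orderOf y := by
      have := Subgroup.orderOf_dvd_natCard (zpowers y) hb
      rwa [Nat.card_zpowers] at this
    simp [hT, orderOf_dvd_iff_pow_eq_one.mp hd]
  have hcard : ((zpowers y : Set G).toFinset).card = orderOf y := by
    rw [Set.toFinset_card]
    simpa using Fintype.card_zpowers (x := y)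
  have heq : ((zpowers y : Set G).toFinset : Finset G) = T :=
    Finset.eq_of_subset_of_card_le hsub (by rw [hcard]; exact hle')
  have hx : x ∈ T := by
    simp [hT, orderOf_dvd_iff_pow_eq_one.mp h]
  rw [← heq, Set.mem_toFinset] at hx
  exact hx

theorem powerGraph_complete_iff {G : Type*} [Group G] [Finite G] :
    powerGraph G = ⊤ ↔
      IsCyclic G ∧ ∃ p n : ℕ, p.Prime ∧ Nat.card G = p ^ n := by
  classical
  have : Fintype G := Fintype.ofFinite G
  have hiff : powerGraph G = ⊤ ↔ ∀ x y : G, x ≠ y →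
      ((∃ m : ℕ, 0 < m ∧ x = y ^ m) ∨ (∃ m : ℕ, 0 < m ∧ y = x ^ m)) := by
    constructor
    · intro h x y hxy
      have := h ▸ (SimpleGraph.top_adj x y).mpr hxy
      rw [powerGraph, SimpleGraph.fromRel_adj] at this
      exact this.2
    · intro h
      ext x y
      rw [powerGraph, SimpleGraph.fromRel_adj, SimpleGraph.top_adj]
      exact ⟨fun hh => hh.1, fun hh => ⟨hh, h x y hh⟩⟩
  rw [hiff]
  constructor
  · intro H
    -- key: any two cyclic subgroups comparable
    have key : ∀ x y : G, x ∈ Subgroup.zpowers y ∨ y ∈ Subgroup.zpowers x := by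
      intro x y
      by_cases hxy : x = y
      · subst hxy; exact Or.inl (Subgroup.mem_zpowers x)
      · rcases H x y hxy with ⟨m, _, hm⟩ | ⟨m, _, hm⟩
        · exact Or.inl ⟨(m : ℤ), by simpa using hm.symm⟩
        · exact Or.inr ⟨(m : ℤ), by simpa using hm.symm⟩
    have hcyc : IsCyclic G := by
      obtain ⟨g, hg⟩ := Finite.exists_max (fun g : G => orderOf g)
      refine ⟨g, fun y => ?_⟩
      rcases key y g with h | h
      · exact h
      · -- g ∈ zpowers y, so orderOf g ∣ orderOf y, and orderOf y ≤ orderOf g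
        have hd : orderOf g ∣ orderOf y := by
          have := Subgroup.orderOf_dvd_natCard (Subgroup.zpowers y) h
          rwa [Nat.card_zpowers] at this
        have heq : orderOf g = orderOf y :=
          le_antisymm (Nat.le_of_dvd (orderOf_pos y) hd) (hg y)
        -- zpowers g ≤ zpowers y with equal cards
        have hle : Subgroup.zpowers g ≤ Subgroup.zpowers y := by
          rwa [Subgroup.zpowers_le]
        have hnc : ∀ z : G, (Subgroup.zpowers z : Set G).ncard = orderOf z := fun z => by
          rw [← Nat.card_coe_set_eq, SetLike.coe_sort_coe]
          exact Nat.card_zpowers z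
        have hcards : (Subgroup.zpowers y : Set G).ncard ≤ (Subgroup.zpowers g : Set G).ncard := by
          rw [hnc, hnc]
          exact heq.ge
        have hset : (Subgroup.zpowers g : Set G) = (Subgroup.zpowers y : Set G) :=
          Set.eq_of_subset_of_ncard_le hle hcards (Set.toFinite _)
        have : Subgroup.zpowers g = Subgroup.zpowers y := SetLike.coe_injective hset
        have hmem := Subgroup.mem_zpowers y
        rwa [← this] at hmem
    refine ⟨hcyc, ?_⟩
    by_cases h1 : Nat.card G = 1
    · exact ⟨2, 0, Nat.prime_two, by simpa using h1⟩
    · have hpos : Nat.card G ≠ 0 := Nat.card_pos.ne'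
      set p := (Nat.card G).minFac with hp
      have hpprime : p.Prime := Nat.minFac_prime h1
      have huniq : ∀ {d : ℕ}, d.Prime → d ∣ Nat.card G → d = p := by
        intro q hq hqd
        by_contra hne
        have hpd : p ∣ Nat.card G := Nat.minFac_dvd _
        have : Fact q.Prime := ⟨hq⟩
        have : Fact p.Prime := ⟨hpprime⟩
        obtain ⟨x, hx⟩ := exists_prime_orderOf_dvd_card' (G := G) q hqd
        obtain ⟨y, hy⟩ := exists_prime_orderOf_dvd_card' (G := G) p hpd
        have hxy : x ≠ y := fun e => hne (by rw [← hx, ← hy, e])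
        rcases H x y hxy with ⟨m, _, hm⟩ | ⟨m, _, hm⟩
        · have hdvd : orderOf x ∣ orderOf y := by rw [hm]; exact orderOf_pow_dvd m
          rw [hx, hy] at hdvd
          exact hne ((Nat.prime_dvd_prime_iff_eq hq hpprime).mp hdvd)
        · have hdvd : orderOf y ∣ orderOf x := by rw [hm]; exact orderOf_pow_dvd m
          rw [hx, hy] at hdvd
          exact hne ((Nat.prime_dvd_prime_iff_eq hpprime hq).mp hdvd).symm
      have := Nat.eq_prime_pow_of_unique_prime_dvd hpos huniq
      exact ⟨p, _, hpprime, this⟩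
  · rintro ⟨hcyc, p, n, hpprime, hcard⟩ x y hxy
    have hx : orderOf x ∣ p ^ n := hcard ▸ orderOf_dvd_natCard x
    have hy : orderOf y ∣ p ^ n := hcard ▸ orderOf_dvd_natCard y
    obtain ⟨a, _, ha⟩ := (Nat.dvd_prime_pow hpprime).mp hx
    obtain ⟨b, _, hb⟩ := (Nat.dvd_prime_pow hpprime).mp hy
    have hmem : x ∈ Subgroup.zpowers y ∨ y ∈ Subgroup.zpowers x := by
      rcases le_total a b with hab | hab
      · exact Or.inl (mem_zpowers_of_orderOf_dvd_aux (by rw [ha, hb]; exact pow_dvd_pow p hab))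
      · exact Or.inr (mem_zpowers_of_orderOf_dvd_aux (by rw [ha, hb]; exact pow_dvd_pow p hab))
    have getpow : ∀ u v : G, u ∈ Subgroup.zpowers v → ∃ m : ℕ, 0 < m ∧ u = v ^ m := by
      intro u v hu
      rw [← (isOfFinOrder_of_finite v).mem_powers_iff_mem_zpowers] at hu
      obtain ⟨m, hm⟩ := hu
      refine ⟨m + orderOf v, by have := orderOf_pos v; omega, ?_⟩
      rw [pow_add, pow_orderOf_eq_one, mul_one]
      exact hm.symm
    rcases hmem with h | h
    · exact Or.inl (getpow x y h)
    · exact Or.inr (getpow y x h)
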